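/- Let ψ, φ be C² and strictly positive on an open set G ⊆ ℝ^d with L ψ = −λψ and L* φ = −λφ, where L f = b·Df + (1/2) tr[a D²f] and L* is its formal adjoint. Define Ψ := −log ψ and the operator L_Y f := b·Df − Df·aDΨ + (1/2) tr[a D²f] with formal adjoint L_Y*. Then L_Y*(φψ)(x) = 0 for all x ∈ G. Equivalently, η := φψ is a stationary density for the generator L_Y. -/

import Mathlib

open Matrix

/-- Partial derivative `∂f/∂x_i` of `f : ℝ^d → ℝ`. -/
noncomputable def pd {d : ℕ} (f : (Fin d → ℝ) → ℝ) (i : Fin d) (x : Fin d → ℝ) : ℝ :=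
  fderiv ℝ f x (Pi.single i 1)

/-- Gradient of `f : ℝ^d → ℝ`. -/
noncomputable def grad {d : ℕ} (f : (Fin d → ℝ) → ℝ) (x : Fin d → ℝ) : Fin d → ℝ :=
  fun i => pd f i x

/-- Second partial derivative `∂²f/∂x_i∂x_j`. -/
noncomputable def pd2 {d : ℕ} (f : (Fin d → ℝ) → ℝ) (i j : Fin d) (x : Fin d → ℝ) : ℝ :=
  pd (pd f j) i x

/-- Hessian matrix of `f : ℝ^d → ℝ`. -/
noncomputable def hess {d : ℕ} (f : (Fin d → ℝ) → ℝ) (x : Fin d → ℝ) :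
    Matrix (Fin d) (Fin d) ℝ :=
  Matrix.of fun i j => pd2 f i j x


/-- The drift `β` of the formal adjoint `L*`: `β_i = −b_i + Σ_j ∂_j a_{ij}`. -/
noncomputable def betaOf {d : ℕ} (a : (Fin d → ℝ) → Matrix (Fin d) (Fin d) ℝ)
    (b : (Fin d → ℝ) → (Fin d → ℝ)) (x : Fin d → ℝ) : Fin d → ℝ :=
  fun i => -(b x i) + ∑ j, pd (fun y => a y i j) j x

/-- The zeroth order coefficient of `L*`:
`c = −(1/2)Σ_{i,j} ∂_i∂_j a_{ij} + Σ_i ∂_i b_i`. -/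
noncomputable def cOf {d : ℕ} (a : (Fin d → ℝ) → Matrix (Fin d) (Fin d) ℝ)
    (b : (Fin d → ℝ) → (Fin d → ℝ)) (x : Fin d → ℝ) : ℝ :=
  -(1 / 2) * ∑ i, ∑ j, pd2 (fun y => a y i j) i j x + ∑ i, pd (fun y => b y i) i x

section pdlemmas
variable {d : ℕ} {f g : (Fin d → ℝ) → ℝ} {x : Fin d → ℝ} {i : Fin d}

lemma pd_congr (h : f =ᶠ[nhds x] g) : pd f i x = pd g i x := by
  unfold pd; rw [Filter.EventuallyEq.fderiv_eq h]

lemma pd_add (hf : DifferentiableAt ℝ f x) (hg : DifferentiableAt ℝ g x) :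
    pd (fun y => f y + g y) i x = pd f i x + pd g i x := by
  unfold pd; rw [fderiv_fun_add hf hg]; simp

lemma pd_neg : pd (fun y => -f y) i x = -pd f i x := by
  unfold pd; rw [fderiv_fun_neg]; simp

lemma pd_mul (hf : DifferentiableAt ℝ f x) (hg : DifferentiableAt ℝ g x) :
    pd (fun y => f y * g y) i x = pd f i x * g x + f x * pd g i x := by
  unfold pd; rw [fderiv_fun_mul hf hg]; simp [smul_eq_mul]; ring

lemma pd_div (hf : DifferentiableAt ℝ f x) (hg : DifferentiableAt ℝ g x) (h0 : g x ≠ 0) :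
    pd (fun y => f y / g y) i x = (pd f i x * g x - f x * pd g i x) / g x ^ 2 := by
  have hinv : HasFDerivAt (fun y => (g y)⁻¹) ((-(g x ^ 2)⁻¹) • fderiv ℝ g x) x :=
    (hasDerivAt_inv h0).comp_hasFDerivAt x hg.hasFDerivAt
  have hdiv : HasFDerivAt (fun y => f y / g y)
      (f x • ((-(g x ^ 2)⁻¹) • fderiv ℝ g x) + (g x)⁻¹ • fderiv ℝ f x) x := by
    simpa [div_eq_mul_inv] using hf.hasFDerivAt.fun_mul hinv
  unfold pd
  rw [hdiv.fderiv]
  simp [smul_eq_mul]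
  field_simp
  ring

lemma pd_log (hf : DifferentiableAt ℝ f x) (h0 : f x ≠ 0) :
    pd (fun y => Real.log (f y)) i x = pd f i x / f x := by
  unfold pd; rw [(hf.hasFDerivAt.log h0).fderiv]
  simp [smul_eq_mul, div_eq_inv_mul]

lemma contDiffOn_pd {G : Set (Fin d → ℝ)} (hG : IsOpen G) (hf : ContDiffOn ℝ 2 f G)
    (j : Fin d) : ContDiffOn ℝ 1 (pd f j) G :=
  (ContinuousLinearMap.apply ℝ ℝ (Pi.single j 1 : Fin d → ℝ)).contDiff.comp_contDiffOn
    (hf.fderiv_of_isOpen hG (by norm_num))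

lemma diffAt_of_cd2 {G : Set (Fin d → ℝ)} (hG : IsOpen G)
    (hf : ContDiffOn ℝ 2 f G) {x : Fin d → ℝ} (hx : x ∈ G) : DifferentiableAt ℝ f x :=
  ((hf.differentiableOn (by norm_num)).differentiableAt (hG.mem_nhds hx))

lemma diffAt_pd_of_cd2 {G : Set (Fin d → ℝ)} (hG : IsOpen G)
    (hf : ContDiffOn ℝ 2 f G) (j : Fin d) {x : Fin d → ℝ} (hx : x ∈ G) :
    DifferentiableAt ℝ (pd f j) x :=
  (((contDiffOn_pd hG hf j).differentiableOn (by norm_num)).differentiableAt (hG.mem_nhds hx))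

end pdlemmas

lemma alg {d : ℕ} (n m c lam : ℝ) (hn : n ≠ 0) (B Q P : Fin d → ℝ)
    (A Q2 P2 : Fin d → Fin d → ℝ) (A1 : Fin d → Fin d → Fin d → ℝ)
    (hA : ∀ i j, A i j = A j i) (hA1 : ∀ i j k, A1 i j k = A1 j i k)
    (E1 : ∑ i, B i * P i + (1/2) * ∑ i, ∑ j, A i j * P2 j i = -lam * n)
    (E2 : ∑ i, (-B i + ∑ j, A1 i j j) * Q i + (1/2) * ∑ i, ∑ j, A i j * Q2 j i - c * m
        = -lam * m) :
    ∑ i, (-B i - (∑ j, A i j * P j) / n + ∑ j, A1 i j j) * (Q i * n + m * P i)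
      + (1/2) * ∑ i, ∑ j, A i j * (Q2 j i * n + Q i * P j + Q j * P i + m * P2 j i)
      - (c - ∑ i, ∑ j, (A1 i j i * (-(P j / n))
            + A i j * (-((P2 i j * n - P j * P i) / n^2)))) * (m * n) = 0 := by
  have hu : n * n⁻¹ = 1 := mul_inv_cancel₀ hn
  have r3 : ∑ i, ∑ j, A i j * (Q j * P i) = ∑ i, ∑ j, A i j * (Q i * P j) := by
    rw [Finset.sum_comm]
    exact Finset.sum_congr rfl fun i _ => Finset.sum_congr rfl fun j _ => by rw [hA j i]
  have r1 : ∑ i, ∑ j, A1 i j i * P j = ∑ i, ∑ j, A1 i j j * P i := by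
    rw [Finset.sum_comm]
    exact Finset.sum_congr rfl fun i _ => Finset.sum_congr rfl fun j _ => by rw [hA1 j i]
  have r2 : ∑ i, ∑ j, A i j * P2 i j = ∑ i, ∑ j, A i j * P2 j i := by
    rw [Finset.sum_comm]
    exact Finset.sum_congr rfl fun i _ => Finset.sum_congr rfl fun j _ => by rw [hA j i]
  have E2' : -∑ i, B i * Q i + ∑ i, ∑ j, A1 i j j * Q i
      + (1/2) * ∑ i, ∑ j, A i j * Q2 j i - c * m = -lam * m := by
    rw [← E2]
    have h : ∀ i : Fin d, (-B i + ∑ j, A1 i j j) * Q i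
        = -(B i * Q i) + ∑ j, A1 i j j * Q i := by
      intro i; rw [add_mul, neg_mul, Finset.sum_mul]
    rw [Finset.sum_congr rfl fun i _ => h i, Finset.sum_add_distrib]
    simp only [Finset.sum_neg_distrib]
  have key : ∀ i : Fin d, (-B i - (∑ j, A i j * P j) / n + ∑ j, A1 i j j) * (Q i * n + m * P i)
      = n * -(B i * Q i) + m * -(B i * P i) + n * (∑ j, A1 i j j * Q i)
        + m * (∑ j, A1 i j j * P i)
        - (∑ j, A i j * (Q i * P j)) - (m * n⁻¹) * (∑ j, A i j * (P j * P i)) := by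
    intro i
    have e1 : ∑ j, A i j * (Q i * P j) = (∑ j, A i j * P j) * Q i := by
      rw [Finset.sum_mul]; exact Finset.sum_congr rfl fun j _ => by ring
    have e2 : ∑ j, A i j * (P j * P i) = (∑ j, A i j * P j) * P i := by
      rw [Finset.sum_mul]; exact Finset.sum_congr rfl fun j _ => by ring
    have e3 : ∑ j, A1 i j j * Q i = (∑ j, A1 i j j) * Q i := (Finset.sum_mul _ _ _).symm
    have e4 : ∑ j, A1 i j j * P i = (∑ j, A1 i j j) * P i := (Finset.sum_mul _ _ _).symm
    rw [e1, e2, e3, e4]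
    field_simp
    ring
  rw [Finset.sum_congr rfl fun i _ => key i]
  have key2 : ∀ i j : Fin d, A i j * (Q2 j i * n + Q i * P j + Q j * P i + m * P2 j i)
      = n * (A i j * Q2 j i) + A i j * (Q i * P j) + A i j * (Q j * P i)
        + m * (A i j * P2 j i) := by intro i j; ring
  rw [Finset.sum_congr rfl fun i _ => Finset.sum_congr rfl fun j _ => key2 i j]
  have key3 : ∀ i j : Fin d, (A1 i j i * (-(P j / n))
        + A i j * (-((P2 i j * n - P j * P i) / n^2)))
      = n⁻¹ * -(A1 i j i * P j) + n⁻¹ * -(A i j * P2 i j)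
        + (n⁻¹ * n⁻¹) * (A i j * (P j * P i)) := by
    intro i j; field_simp; ring
  rw [Finset.sum_congr rfl fun i _ => Finset.sum_congr rfl fun j _ => key3 i j]
  simp only [Finset.sum_add_distrib, Finset.sum_sub_distrib, ← Finset.mul_sum,
    Finset.sum_neg_distrib]
  linear_combination n * E2' - m * E1 - m * r1 - m * r2 + (1/2) * r3
    + (m * n⁻¹ * (∑ i, ∑ j, A i j * (P j * P i))
       - m * (∑ i, ∑ j, A1 i j i * P j) - m * (∑ i, ∑ j, A i j * P2 i j)) * hu

/-- if `Lψ = −λψ` and `L*φ = −λφ` with `ψ, φ > 0` C² on `G`, and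
`Ψ := −log ψ`, then with `L_Y* h = β̂·Dh + (1/2)tr[a D²h] − ĉ h` (the formal adjoint of the
generator `L_Y f = b·Df − Df·aDΨ + (1/2)tr[a D²f]` of the controlled process), where
`β̂_i = −b_i − (aDψ)_i/ψ + Σ_j ∂_j a_{ij}` and `ĉ = c − Σ_{i,j} ∂_i(a_{ij} Ψ_{x_j})`,
one has `L_Y*(φψ) = 0` on `G`, i.e. `η = φψ` is a stationary density for `L_Y`. -/
theorem stmt7 {d : ℕ} (G : Set (Fin d → ℝ)) (hG : IsOpen G)
    (a : (Fin d → ℝ) → Matrix (Fin d) (Fin d) ℝ) (hsym : ∀ x, (a x).IsSymm)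
    (hapos : ∀ x ∈ G, (a x).PosDef) (ha : ∀ i j, ContDiffOn ℝ 2 (fun y => a y i j) G)
    (b : (Fin d → ℝ) → (Fin d → ℝ)) (hb : ∀ i, ContDiffOn ℝ 1 (fun y => b y i) G)
    (lam : ℝ) (ψ φ : (Fin d → ℝ) → ℝ)
    (hψ : ContDiffOn ℝ 2 ψ G) (hφ : ContDiffOn ℝ 2 φ G)
    (hψpos : ∀ x ∈ G, 0 < ψ x) (hφpos : ∀ x ∈ G, 0 < φ x)
    (hψeig : ∀ x ∈ G,
      b x ⬝ᵥ grad ψ x + (1 / 2) * (a x * hess ψ x).trace = -lam * ψ x)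
    (hφeig : ∀ x ∈ G,
      betaOf a b x ⬝ᵥ grad φ x + (1 / 2) * (a x * hess φ x).trace
        - cOf a b x * φ x = -lam * φ x)
    (Ψ : (Fin d → ℝ) → ℝ) (hΨ : Ψ = fun x => -Real.log (ψ x)) :
    ∀ x ∈ G,
      (fun i => -(b x i) - (a x).mulVec (grad ψ x) i / ψ x
          + ∑ j, pd (fun y => a y i j) j x) ⬝ᵥ grad (fun y => φ y * ψ y) x
        + (1 / 2) * (a x * hess (fun y => φ y * ψ y) x).trace
        - (cOf a b x - ∑ i, ∑ j, pd (fun y => a y i j * pd Ψ j y) i x) * (φ x * ψ x)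
      = 0 := by
  intro x hx
  have hmem : G ∈ nhds x := hG.mem_nhds hx
  have hψx : ψ x ≠ 0 := (hψpos x hx).ne'
  -- differentiability on G
  have hdψ : ∀ y ∈ G, DifferentiableAt ℝ ψ y := fun y hy => diffAt_of_cd2 hG hψ hy
  have hdφ : ∀ y ∈ G, DifferentiableAt ℝ φ y := fun y hy => diffAt_of_cd2 hG hφ hy
  have hdpψ : ∀ j, ∀ y ∈ G, DifferentiableAt ℝ (pd ψ j) y :=
    fun j y hy => diffAt_pd_of_cd2 hG hψ j hy
  have hdpφ : ∀ j, ∀ y ∈ G, DifferentiableAt ℝ (pd φ j) y :=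
    fun j y hy => diffAt_pd_of_cd2 hG hφ j hy
  have hda : ∀ i j, ∀ y ∈ G, DifferentiableAt ℝ (fun z => a z i j) y :=
    fun i j y hy => diffAt_of_cd2 hG (ha i j) hy
  -- the product expansion of pd (φ ψ) on G
  have hprod : ∀ i : Fin d, ∀ y ∈ G, pd (fun z => φ z * ψ z) i y
      = pd φ i y * ψ y + φ y * pd ψ i y :=
    fun i y hy => pd_mul (hdφ y hy) (hdψ y hy)
  -- gradient fact
  have g1 : ∀ i : Fin d, grad (fun y => φ y * ψ y) x i
      = pd φ i x * ψ x + φ x * pd ψ i x := fun i => hprod i x hx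
  -- hessian fact
  have g2 : ∀ i j : Fin d, hess (fun y => φ y * ψ y) x j i
      = pd2 φ j i x * ψ x + pd φ i x * pd ψ j x + pd φ j x * pd ψ i x
        + φ x * pd2 ψ j i x := by
    intro i j
    have hcong : (fun y => pd (fun z => φ z * ψ z) i y)
        =ᶠ[nhds x] (fun y => pd φ i y * ψ y + φ y * pd ψ i y) := by
      filter_upwards [hmem] with y hy using hprod i y hy
    have : hess (fun y => φ y * ψ y) x j i = pd (pd (fun z => φ z * ψ z) i) j x := rfl
    rw [this, pd_congr hcong,
      pd_add ((hdpφ i x hx).fun_mul (hdψ x hx)) ((hdφ x hx).fun_mul (hdpψ i x hx)),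
      pd_mul (hdpφ i x hx) (hdψ x hx), pd_mul (hdφ x hx) (hdpψ i x hx)]
    show pd2 φ j i x * ψ x + pd φ i x * pd ψ j x + (pd φ j x * pd ψ i x + φ x * pd2 ψ j i x) = _
    ring
  -- Ψ derivative fact on G
  have hΨpd : ∀ j : Fin d, ∀ y ∈ G, pd Ψ j y = -(pd ψ j y / ψ y) := by
    intro j y hy
    rw [hΨ]
    have : pd (fun z => -Real.log (ψ z)) j y = -pd (fun z => Real.log (ψ z)) j y := pd_neg
    rw [this, pd_log (hdψ y hy) (hψpos y hy).ne']
  -- third sum fact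
  have g3 : ∀ i j : Fin d, pd (fun y => a y i j * pd Ψ j y) i x
      = pd (fun y => a y i j) i x * (-(pd ψ j x / ψ x))
        + a x i j * (-((pd2 ψ i j x * ψ x - pd ψ j x * pd ψ i x) / ψ x ^ 2)) := by
    intro i j
    have hcong : (fun y => a y i j * pd Ψ j y)
        =ᶠ[nhds x] (fun y => a y i j * -(pd ψ j y / ψ y)) := by
      filter_upwards [hmem] with y hy
      rw [hΨpd j y hy]
    have hdq : DifferentiableAt ℝ (fun y => pd ψ j y / ψ y) x := by
      simpa [div_eq_mul_inv] using ((hdpψ j x hx).fun_mul ((hdψ x hx).inv hψx))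
    rw [pd_congr hcong, pd_mul (hda i j x hx) hdq.fun_neg, pd_neg,
      pd_div (hdpψ j x hx) (hdψ x hx) hψx]
    rfl
  -- rewrite the goal into sum form
  simp only [dotProduct, Matrix.trace, Matrix.diag, Matrix.mul_apply, grad, hess,
    Matrix.of_apply, Matrix.mulVec, Finset.sum_apply]
  have g1' : ∀ i : Fin d, pd (fun y => φ y * ψ y) i x
      = pd φ i x * ψ x + φ x * pd ψ i x := fun i => hprod i x hx
  have g2' : ∀ p q : Fin d, pd2 (fun y => φ y * ψ y) p q x
      = pd2 φ p q x * ψ x + pd φ q x * pd ψ p x + pd φ p x * pd ψ q x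
        + φ x * pd2 ψ p q x := by
    intro p q
    have hcong : (fun y => pd (fun z => φ z * ψ z) q y)
        =ᶠ[nhds x] (fun y => pd φ q y * ψ y + φ y * pd ψ q y) := by
      filter_upwards [hmem] with y hy using hprod q y hy
    show pd (pd (fun z => φ z * ψ z) q) p x = _
    rw [pd_congr hcong,
      pd_add ((hdpφ q x hx).fun_mul (hdψ x hx)) ((hdφ x hx).fun_mul (hdpψ q x hx)),
      pd_mul (hdpφ q x hx) (hdψ x hx), pd_mul (hdφ x hx) (hdpψ q x hx)]
    show pd2 φ p q x * ψ x + pd φ q x * pd ψ p x + (pd φ p x * pd ψ q x + φ x * pd2 ψ p q x) = _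
    ring
  simp only [g1', g2', g3]
  have hA : ∀ i j : Fin d, a x i j = a x j i := fun i j => (hsym x).apply j i
  have hA1 : ∀ i j k : Fin d, pd (fun y => a y i j) k x = pd (fun y => a y j i) k x := by
    intro i j k
    rw [show (fun y => a y i j) = (fun y => a y j i) from funext fun y => (hsym y).apply j i]
  have E1 := hψeig x hx
  have E2 := hφeig x hx
  simp only [dotProduct, Matrix.trace, Matrix.diag, Matrix.mul_apply, grad, hess,
    Matrix.of_apply, betaOf] at E1 E2
  exact alg (ψ x) (φ x) (cOf a b x) lam hψx (b x) (fun i => pd φ i x) (fun i => pd ψ i x)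
    (fun i j => a x i j) (fun i j => pd2 φ i j x) (fun i j => pd2 ψ i j x)
    (fun i j k => pd (fun y => a y i j) k x) hA hA1 E1 E2
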